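/- Let E be a reflexive Banach space that embeds continuously into a normed space Y with embedding constant S⁻¹ (i.e., ‖u‖_Y ≤ S⁻¹‖u‖_E for all u). Suppose I : E → ℝ satisfies, for constants 1 < s⁺ < p⁻ < t⁺ and C₁ > 1, λ, θ > 0: I(u) ≥ (1/p⁺)‖u‖^{p⁻} − (C₁^{s⁺}λ/s⁻)‖u‖^{s⁺} − (C₁^{t⁺}θ/t⁻)‖u‖^{t⁺} for ‖u‖ ≥ 1, where also p⁺ ≥ p⁻, etc. Define g_λ(τ) = (1/p⁺)τ^{p⁻} − (C₁^{s⁺}λ/s⁻)τ^{s⁺} − (C₁^{t⁺}θ/t⁻)τ^{t⁺}. If λ < c₀ θ^{(s⁺−p⁻)/(t⁺−p⁻)} where c₀ is the explicit constant c₀ = a₀^{(t⁺−s⁺)/(t⁺−p⁻)} b₀^{(s⁺−p⁻)/(t⁺−p⁻)} ((p⁻−s⁺)/(t⁺−s⁺))^{(p⁻−s⁺)/(t⁺−p⁻)} (t⁺−p⁻)/(t⁺−s⁺) with a₀ = s⁻/(p⁺C₁^{s⁺}) and b₀ = s⁻C₁^{t⁺−s⁺}/t⁻, then g_λ has exactly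 two positive roots T₀ < T₁, and g_λ(τ) < 0 on (0,T₀) ∪ (T₁,∞) while g_λ(τ) > 0 on (T₀,T₁). -/

import Mathlib

open Real Set

lemma cont_h (a b α β : ℝ) (hα : 0 < α) (hβ : 0 < β) :
    Continuous (fun τ : ℝ => a * τ ^ α - b * τ ^ β) := by
  apply Continuous.sub
  · exact continuous_const.mul (continuous_iff_continuousAt.2 fun x =>
      Real.continuousAt_rpow_const x α (Or.inr hα.le))
  · exact continuous_const.mul (continuous_iff_continuousAt.2 fun x =>
      Real.continuousAt_rpow_const x β (Or.inr hβ.le))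

lemma deriv_h (a b α β x : ℝ) (hx : 0 < x) :
    deriv (fun τ : ℝ => a * τ ^ α - b * τ ^ β) x
      = x ^ (α - 1) * (a * α - b * β * x ^ (β - α)) := by
  have h1 : HasDerivAt (fun τ : ℝ => a * τ ^ α - b * τ ^ β)
      (a * (α * x ^ (α - 1)) - b * (β * x ^ (β - 1))) x :=
    ((Real.hasDerivAt_rpow_const (Or.inl hx.ne')).const_mul a).sub
      ((Real.hasDerivAt_rpow_const (Or.inl hx.ne')).const_mul b)
  rw [h1.deriv]
  have h2 : x ^ (β - 1) = x ^ (α - 1) * x ^ (β - α) := by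
    rw [← Real.rpow_add hx]; ring_nf
  rw [h2]; ring

lemma two_crossings (a b α β lam : ℝ) (ha : 0 < a) (hb : 0 < b) (hα : 0 < α)
    (hαβ : α < β) (hlam : 0 < lam)
    (hmax : lam < a * (β - α) / β * (a * α / (b * β)) ^ (α / (β - α))) :
    ∃ T₀ T₁ : ℝ, 0 < T₀ ∧ T₀ < T₁ ∧
      a * T₀ ^ α - b * T₀ ^ β = lam ∧ a * T₁ ^ α - b * T₁ ^ β = lam ∧
      (∀ τ, 0 < τ → τ < T₀ → a * τ ^ α - b * τ ^ β < lam) ∧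
      (∀ τ, T₁ < τ → a * τ ^ α - b * τ ^ β < lam) ∧
      (∀ τ, T₀ < τ → τ < T₁ → lam < a * τ ^ α - b * τ ^ β) := by
  have hβ : 0 < β := hα.trans hαβ
  set h : ℝ → ℝ := fun τ => a * τ ^ α - b * τ ^ β with hh
  set δ : ℝ := β - α with hδdef
  have hδ : 0 < δ := by simp [hδdef]; linarith
  set Q : ℝ := a * α / (b * β) with hQdef
  have hQ : 0 < Q := by positivity
  set τs : ℝ := Q ^ δ⁻¹ with hτsdef
  have hτs : 0 < τs := Real.rpow_pos_of_pos hQ _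
  have hτsδ : τs ^ δ = Q := by
    rw [hτsdef, ← Real.rpow_mul hQ.le, inv_mul_cancel₀ hδ.ne', Real.rpow_one]
  have hcont : Continuous h := cont_h a b α β hα hβ
  -- monotone on [0, τs]
  have hmono : StrictMonoOn h (Icc 0 τs) := by
    apply strictMonoOn_of_deriv_pos (convex_Icc _ _) hcont.continuousOn
    intro x hx
    rw [interior_Icc] at hx
    rw [hh, deriv_h a b α β x hx.1]
    have hxδ : x ^ δ < Q := by
      calc x ^ δ < τs ^ δ := Real.rpow_lt_rpow hx.1.le hx.2 hδ
      _ = Q := hτsδ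
    have h2 : x ^ δ * (b * β) < a * α := (lt_div_iff₀ (by positivity)).1 hxδ
    have h3 : 0 < a * α - b * β * x ^ δ := by linarith
    exact mul_pos (Real.rpow_pos_of_pos hx.1 _) h3
  -- antitone on [τs, ∞)
  have hanti : StrictAntiOn h (Ici τs) := by
    apply strictAntiOn_of_deriv_neg (convex_Ici _) hcont.continuousOn
    intro x hx
    rw [interior_Ici] at hx
    have hx0 : 0 < x := hτs.trans hx
    rw [hh, deriv_h a b α β x hx0]
    have hxδ : Q < x ^ δ := by
      calc Q = τs ^ δ := hτsδ.symm
      _ < x ^ δ := Real.rpow_lt_rpow hτs.le hx hδ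
    have h2 : a * α < x ^ δ * (b * β) := (div_lt_iff₀ (by positivity)).1 hxδ
    have h3 : a * α - b * β * x ^ δ < 0 := by linarith
    exact mul_neg_of_pos_of_neg (Real.rpow_pos_of_pos hx0 _) h3
  -- value at τs
  have hhτs : h τs = a * (β - α) / β * Q ^ (α / δ) := by
    have h1 : τs ^ α = Q ^ (α / δ) := by
      rw [hτsdef, ← Real.rpow_mul hQ.le, show δ⁻¹ * α = α / δ by ring]
    have h2 : τs ^ β = Q ^ (α / δ) * Q := by
      rw [hτsdef, ← Real.rpow_mul hQ.le,
        (show δ⁻¹ * β = α / δ + 1 by rw [hδdef]; field_simp [(show β - α ≠ 0 by linarith)]; try ring),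
        Real.rpow_add hQ, Real.rpow_one]
    have hbQ : b * Q = a * α / β := by rw [hQdef]; field_simp
    have h3 : h τs = (a - b * Q) * Q ^ (α / δ) := by rw [hh]; simp only; rw [h1, h2]; ring
    rw [h3, hbQ, show a - a * α / β = a * (β - α) / β from by field_simp]
  have hmax' : lam < h τs := by rw [hhτs]; exact hmax
  have hh0 : h 0 = 0 := by
    simp [hh, Real.zero_rpow hα.ne', Real.zero_rpow hβ.ne']
  -- point X far to the right where h < 0
  set X : ℝ := max τs ((a / b) ^ δ⁻¹) + 1 with hXdef
  have hXτs : τs < X := by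
    have := le_max_left τs ((a / b) ^ δ⁻¹); rw [hXdef]; linarith
  have hX0 : 0 < X := hτs.trans hXτs
  have hab0 : (0:ℝ) ≤ (a / b) ^ δ⁻¹ := (Real.rpow_pos_of_pos (by positivity) _).le
  have hXab : (a / b) ^ δ⁻¹ < X := by
    have := le_max_right τs ((a / b) ^ δ⁻¹); rw [hXdef]; linarith
  have hhX : h X < 0 := by
    have h1 : a / b < X ^ δ := by
      calc a / b = ((a / b) ^ δ⁻¹) ^ δ := by
            rw [← Real.rpow_mul (by positivity : (0:ℝ) ≤ a / b),
              inv_mul_cancel₀ hδ.ne', Real.rpow_one]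
      _ < X ^ δ := Real.rpow_lt_rpow hab0 hXab hδ
    have h2 : a < X ^ δ * b := (div_lt_iff₀ hb).1 h1
    have h3 : X ^ β = X ^ α * X ^ δ := by
      rw [← Real.rpow_add hX0, hδdef]; ring_nf
    have h4 : 0 < X ^ α := Real.rpow_pos_of_pos hX0 _
    rw [hh]; simp only; rw [h3]; nlinarith
  -- existence of T₀ by IVT on [0, τs]
  obtain ⟨T₀, hT₀mem, hT₀⟩ := intermediate_value_Ioo hτs.le
    (hcont.continuousOn (s := Icc 0 τs)) ⟨by rw [hh0]; exact hlam, hmax'⟩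
  -- existence of T₁ by IVT on [τs, X]
  obtain ⟨T₁, hT₁mem, hT₁⟩ := intermediate_value_Ioo' hXτs.le
    (hcont.continuousOn (s := Icc τs X)) ⟨hhX.trans hlam, hmax'⟩
  have hT₀pos : 0 < T₀ := hT₀mem.1
  have hT₀τs : T₀ < τs := hT₀mem.2
  have hτsT₁ : τs < T₁ := hT₁mem.1
  refine ⟨T₀, T₁, hT₀pos, hT₀τs.trans hτsT₁, hT₀, hT₁, ?_, ?_, ?_⟩
  · intro τ hτ hτT₀
    have := hmono ⟨hτ.le, (hτT₀.trans hT₀τs).le⟩ ⟨hT₀pos.le, hT₀τs.le⟩ hτT₀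
    rw [hT₀] at this; exact this
  · intro τ hτ
    have := hanti (mem_Ici.2 hτsT₁.le) (mem_Ici.2 (hτsT₁.trans hτ).le) hτ
    rw [hT₁] at this; exact this
  · intro τ hτ₀ hτ₁
    rcases le_or_gt τ τs with hc | hc
    · have := hmono ⟨hT₀pos.le, hT₀τs.le⟩ ⟨(hT₀pos.trans hτ₀).le, hc⟩ hτ₀
      rw [hT₀] at this; exact this
    · have := hanti (mem_Ici.2 hc.le) (mem_Ici.2 hτsT₁.le) hτ₁
      rw [hT₁] at this; exact this


lemma max_eq (a₀ b₀ θ pm sP tP : ℝ) (ha : 0 < a₀) (hb : 0 < b₀) (hθ : 0 < θ)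
    (h1 : sP < pm) (h2 : pm < tP) :
    a₀ ^ ((tP - sP) / (tP - pm)) * b₀ ^ ((sP - pm) / (tP - pm)) *
      ((pm - sP) / (tP - sP)) ^ ((pm - sP) / (tP - pm)) * ((tP - pm) / (tP - sP)) *
      θ ^ ((sP - pm) / (tP - pm))
    = a₀ * ((tP - sP) - (pm - sP)) / (tP - sP) *
      (a₀ * (pm - sP) / (b₀ * θ * (tP - sP))) ^ ((pm - sP) / ((tP - sP) - (pm - sP))) := by
  have hts : 0 < tP - sP := by linarith
  have htp : 0 < tP - pm := by linarith
  have hps : 0 < pm - sP := by linarith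
  set e : ℝ := (pm - sP) / (tP - pm) with hedef
  have he : 0 < e := by positivity
  have hr : (0:ℝ) < (pm - sP) / (tP - sP) := by positivity
  rw [show (pm - sP) / ((tP - sP) - (pm - sP)) = e from by rw [hedef]; ring_nf,
    show (sP - pm) / (tP - pm) = -e from by rw [hedef]; ring,
    show (tP - sP) / (tP - pm) = 1 + e from by rw [hedef]; field_simp; try ring,
    show a₀ * (pm - sP) / (b₀ * θ * (tP - sP)) = a₀ * ((pm - sP) / (tP - sP)) / (b₀ * θ)
      from by field_simp,
    Real.rpow_add ha 1 e, Real.rpow_one,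
    Real.rpow_neg hb.le, Real.rpow_neg hθ.le]
  rw [show a₀ * ((pm - sP) / (tP - sP)) / (b₀ * θ)
      = a₀ * ((pm - sP) / (tP - sP)) * (b₀ * θ)⁻¹ from by ring,
    Real.mul_rpow (by positivity) (by positivity),
    Real.mul_rpow ha.le hr.le,
    Real.inv_rpow (by positivity), Real.mul_rpow hb.le hθ.le]
  have hbe : b₀ ^ e ≠ 0 := (Real.rpow_pos_of_pos hb _).ne'
  have hte : θ ^ e ≠ 0 := (Real.rpow_pos_of_pos hθ _).ne'
  field_simp
  ring



/-- for `λ < c₀ θ^{(s⁺−p⁻)/(t⁺−p⁻)}`, the function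
`g_λ(τ) = (1/p⁺)τ^{p⁻} − (C₁^{s⁺}λ/s⁻)τ^{s⁺} − (C₁^{t⁺}θ/t⁻)τ^{t⁺}` has exactly two
positive roots `T₀ < T₁`, is negative on `(0,T₀) ∪ (T₁,∞)` and positive on `(T₀,T₁)`. -/
theorem stmt11 (sm sP pm pP tm tP C₁ lam θ : ℝ)
    (hsm : 1 < sm) (hs : sm ≤ sP) (hsp : sP < pm) (hp : pm ≤ pP) (hpt : pP < tm)
    (ht : tm ≤ tP) (hC₁ : 1 < C₁) (hθ : 0 < θ) (hlam : 0 < lam)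
    (a₀ b₀ c₀ : ℝ)
    (ha₀ : a₀ = sm / (pP * C₁ ^ sP))
    (hb₀ : b₀ = sm * C₁ ^ (tP - sP) / tm)
    (hc₀ : c₀ = a₀ ^ ((tP - sP) / (tP - pm)) * b₀ ^ ((sP - pm) / (tP - pm)) *
      ((pm - sP) / (tP - sP)) ^ ((pm - sP) / (tP - pm)) * ((tP - pm) / (tP - sP)))
    (hsmall : lam < c₀ * θ ^ ((sP - pm) / (tP - pm))) :
    let g : ℝ → ℝ := fun τ =>
      (1 / pP) * τ ^ pm - (C₁ ^ sP * lam / sm) * τ ^ sP - (C₁ ^ tP * θ / tm) * τ ^ tP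
    ∃ T₀ T₁ : ℝ, 0 < T₀ ∧ T₀ < T₁ ∧ g T₀ = 0 ∧ g T₁ = 0 ∧
      (∀ τ : ℝ, 0 < τ → τ < T₀ → g τ < 0) ∧
      (∀ τ : ℝ, T₁ < τ → g τ < 0) ∧
      (∀ τ : ℝ, T₀ < τ → τ < T₁ → 0 < g τ) ∧
      (∀ τ : ℝ, 0 < τ → g τ = 0 → τ = T₀ ∨ τ = T₁) := by
  intro g
  have hsm0 : (0:ℝ) < sm := by linarith
  have hpP0 : (0:ℝ) < pP := by linarith
  have htm0 : (0:ℝ) < tm := by linarith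
  have hC₁0 : (0:ℝ) < C₁ := by linarith
  have hC₁sP : (0:ℝ) < C₁ ^ sP := Real.rpow_pos_of_pos hC₁0 _
  have hC₁ts : (0:ℝ) < C₁ ^ (tP - sP) := Real.rpow_pos_of_pos hC₁0 _
  have ha₀' : 0 < a₀ := by rw [ha₀]; positivity
  have hb₀' : 0 < b₀ := by rw [hb₀]; positivity
  have hsptP : sP < tP := by linarith
  have hpmtP : pm < tP := by linarith
  have hgdef : ∀ τ : ℝ, g τ = (1 / pP) * τ ^ pm - (C₁ ^ sP * lam / sm) * τ ^ sP -
      (C₁ ^ tP * θ / tm) * τ ^ tP := fun τ => rfl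
  have hmax : lam < a₀ * ((tP - sP) - (pm - sP)) / (tP - sP) *
      (a₀ * (pm - sP) / (b₀ * θ * (tP - sP))) ^ ((pm - sP) / ((tP - sP) - (pm - sP))) := by
    rw [← max_eq a₀ b₀ θ pm sP tP ha₀' hb₀' hθ hsp hpmtP]
    have := hsmall
    rw [hc₀] at this
    exact this
  obtain ⟨T₀, T₁, hT₀pos, hT₀₁, e₀, e₁, sg1, sg2, sg3⟩ :=
    two_crossings a₀ (b₀ * θ) (pm - sP) (tP - sP) lam ha₀' (by positivity)
      (by linarith) (by linarith) hlam hmax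
  have hg : ∀ τ : ℝ, 0 < τ → g τ = (C₁ ^ sP / sm) * τ ^ sP *
      ((a₀ * τ ^ (pm - sP) - b₀ * θ * τ ^ (tP - sP)) - lam) := by
    intro τ hτ
    have h1 : τ ^ pm = τ ^ sP * τ ^ (pm - sP) := by rw [← Real.rpow_add hτ]; ring_nf
    have h2 : τ ^ tP = τ ^ sP * τ ^ (tP - sP) := by rw [← Real.rpow_add hτ]; ring_nf
    have h3 : C₁ ^ tP = C₁ ^ sP * C₁ ^ (tP - sP) := by rw [← Real.rpow_add hC₁0]; ring_nf
    rw [hgdef τ, ha₀, hb₀, h1, h2, h3]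
    field_simp
    ring
  have hK : ∀ τ : ℝ, 0 < τ → 0 < C₁ ^ sP / sm * τ ^ sP := by
    intro τ hτ
    have : (0:ℝ) < τ ^ sP := Real.rpow_pos_of_pos hτ _
    positivity
  refine ⟨T₀, T₁, hT₀pos, hT₀₁, ?_, ?_, ?_, ?_, ?_, ?_⟩
  · rw [hg T₀ hT₀pos, e₀]; ring
  · rw [hg T₁ (hT₀pos.trans hT₀₁), e₁]; ring
  · intro τ h1 h2
    rw [hg τ h1]
    exact mul_neg_of_pos_of_neg (hK τ h1) (sub_neg.2 (sg1 τ h1 h2))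
  · intro τ h1
    have hτ0 : 0 < τ := hT₀pos.trans (hT₀₁.trans h1)
    rw [hg τ hτ0]
    exact mul_neg_of_pos_of_neg (hK τ hτ0) (sub_neg.2 (sg2 τ h1))
  · intro τ h1 h2
    have hτ0 : 0 < τ := hT₀pos.trans h1
    rw [hg τ hτ0]
    exact mul_pos (hK τ hτ0) (sub_pos.2 (sg3 τ h1 h2))
  · intro τ hτ hgτ
    have hKpos := hK τ hτ
    rw [hg τ hτ] at hgτ
    have hinner : a₀ * τ ^ (pm - sP) - b₀ * θ * τ ^ (tP - sP) = lam := by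
      rcases mul_eq_zero.1 hgτ with h | h
      · exact absurd h hKpos.ne'
      · exact sub_eq_zero.1 h
    rcases lt_trichotomy τ T₀ with hlt | heq | hgt
    · exact absurd hinner (ne_of_lt (sg1 τ hτ hlt))
    · exact Or.inl heq
    · rcases lt_trichotomy τ T₁ with h1 | h2 | h3
      · exact absurd hinner (ne_of_gt (sg3 τ hgt h1))
      · exact Or.inr h2
      · exact absurd hinner (ne_of_lt (sg2 τ h3))
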